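/- Let γ ∈ ℝ and define the Mittag-Leffler function E_{α,1}(z) = Σ_{m=0}^∞ z^m / Γ(mα + 1). For α = 1, the function Φ(t) = ν E_{1,1}(γt) = ν e^{γt} satisfies Φ'(t) = γΦ(t) and Φ(0) = ν; consequently, with γ₁ = a₀²c₀ − d₀a₀ + k₁ and γ₂ = k₁ + β₀b₁² − λ₀b₁ + c₀a₀² − a₀d₀, the function u(x₁,x₂,t) = ν₁e^{−a₀x₁}e^{γ₁t} + ν₂e^{−(a₀x₁+b₁x₂)}e^{γ₂t} solves ∂u/∂t = K[u] with K the operator K[u] = (d₂/(3a₀)u² + c₁u + c₀)∂²u/∂x₁² + (2d₂/(3a₀)u + c₁)(∂u/∂x₁)² + β₀∂²u/∂x₂² + (d₂u² + d₁u + d₀)∂u/∂x₁ + λ₀∂u/∂x₂ + (−2a₀²c₁ + a₀d₁)u² + k₁u, and satisfies u(x₁,x₂,0) = ν₁e^{−a₀x₁} + ν₂e^{−(a₀x₁+b₁x₂)}. -/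

import Mathlib

open Real

private lemma expd (c k m : ℝ) (x : ℝ) :
    HasDerivAt (fun s : ℝ => c * exp (k * s + m)) (k * (c * exp (k * x + m))) x := by
  have h : HasDerivAt (fun s : ℝ => k * s + m) k x := by
    simpa using ((hasDerivAt_id x).const_mul k).add_const m
  simpa [mul_comm, mul_left_comm] using (h.exp.const_mul c)

private lemma hda_congr {f g : ℝ → ℝ} {v w x : ℝ} (h : HasDerivAt f v x)
    (hf : g = f) (hv : w = v) : HasDerivAt g w x := hf ▸ hv ▸ h

theorem stmt8 (a₀ b₁ c₀ c₁ d₀ d₁ d₂ b0 l0 k₁ ν₁ ν₂ : ℝ) (ha₀ : a₀ ≠ 0)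
    (γ₁ γ₂ : ℝ)
    (hγ₁ : γ₁ = a₀ ^ 2 * c₀ - d₀ * a₀ + k₁)
    (hγ₂ : γ₂ = k₁ + b0 * b₁ ^ 2 - l0 * b₁ + c₀ * a₀ ^ 2 - a₀ * d₀)
    (K : (ℝ → ℝ → ℝ) → ℝ → ℝ → ℝ)
    (hK : ∀ u : ℝ → ℝ → ℝ, ∀ x y : ℝ,
      K u x y =
        (d₂ / (3 * a₀) * (u x y) ^ 2 + c₁ * u x y + c₀) *
          deriv (fun x' => deriv (fun x'' => u x'' y) x') x +
        (2 * d₂ / (3 * a₀) * u x y + c₁) * (deriv (fun x' => u x' y) x) ^ 2 +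
        b0 * deriv (fun y' => deriv (fun y'' => u x y'') y') y +
        (d₂ * (u x y) ^ 2 + d₁ * u x y + d₀) * deriv (fun x' => u x' y) x +
        l0 * deriv (fun y' => u x y') y +
        (-2 * a₀ ^ 2 * c₁ + a₀ * d₁) * (u x y) ^ 2 + k₁ * u x y) :
    (∀ ν γ : ℝ, (∀ t : ℝ, HasDerivAt (fun s => ν * exp (γ * s))
        (γ * (ν * exp (γ * t))) t) ∧ ν * exp (γ * 0) = ν) ∧
    (∀ x y t : ℝ,
      HasDerivAt (fun s => ν₁ * exp (-a₀ * x) * exp (γ₁ * s) +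
          ν₂ * exp (-(a₀ * x + b₁ * y)) * exp (γ₂ * s))
        (K (fun x₁ x₂ => ν₁ * exp (-a₀ * x₁) * exp (γ₁ * t) +
          ν₂ * exp (-(a₀ * x₁ + b₁ * x₂)) * exp (γ₂ * t)) x y) t) ∧
    (∀ x y : ℝ,
      ν₁ * exp (-a₀ * x) * exp (γ₁ * 0) +
        ν₂ * exp (-(a₀ * x + b₁ * y)) * exp (γ₂ * 0) =
      ν₁ * exp (-a₀ * x) + ν₂ * exp (-(a₀ * x + b₁ * y))) := by
  refine ⟨fun ν γ => ⟨fun t => by simpa [mul_comm, mul_left_comm] using (expd ν γ 0 t), by simp⟩,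
    fun x y t => ?_, fun x y => by simp⟩
  set u : ℝ → ℝ → ℝ := fun x₁ x₂ => ν₁ * exp (-a₀ * x₁) * exp (γ₁ * t) +
      ν₂ * exp (-(a₀ * x₁ + b₁ * x₂)) * exp (γ₂ * t) with hu
  have hdx : ∀ x' : ℝ, deriv (fun x'' => u x'' y) x' = -a₀ * u x' y := by
    intro x'
    refine HasDerivAt.deriv (hda_congr
      ((expd (ν₁ * exp (γ₁ * t)) (-a₀) 0 x').add
        (expd (ν₂ * exp (γ₂ * t)) (-a₀) (-(b₁ * y)) x')) ?_ ?_)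
    · funext s
      simp only [hu, neg_add, neg_mul, Real.exp_add, Real.exp_zero, Pi.add_apply]; ring
    · simp only [hu, neg_add, neg_mul, Real.exp_add, Real.exp_zero]; ring
  have hdxx : deriv (fun x' => deriv (fun x'' => u x'' y) x') x = a₀ ^ 2 * u x y := by
    rw [funext hdx]
    refine HasDerivAt.deriv (hda_congr
      ((expd (-a₀ * (ν₁ * exp (γ₁ * t))) (-a₀) 0 x).add
        (expd (-a₀ * (ν₂ * exp (γ₂ * t))) (-a₀) (-(b₁ * y)) x)) ?_ ?_)
    · funext s
      simp only [hu, neg_add, neg_mul, Real.exp_add, Real.exp_zero, Pi.add_apply]; ring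
    · simp only [hu, neg_add, neg_mul, Real.exp_add, Real.exp_zero]; ring
  have hdy : ∀ y' : ℝ, deriv (fun y'' => u x y'') y' =
      -b₁ * (ν₂ * exp (-(a₀ * x + b₁ * y')) * exp (γ₂ * t)) := by
    intro y'
    refine HasDerivAt.deriv (hda_congr
      ((hasDerivAt_const y' (ν₁ * exp (-a₀ * x) * exp (γ₁ * t))).add
        (expd (ν₂ * exp (γ₂ * t)) (-b₁) (-(a₀ * x)) y')) ?_ ?_)
    · funext s
      simp only [hu, neg_add, neg_mul, Real.exp_add, Real.exp_zero, Pi.add_apply]; ring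
    · simp only [neg_add, neg_mul, Real.exp_add, Real.exp_zero]; ring
  have hdyy : deriv (fun y' => deriv (fun y'' => u x y'') y') y =
      b₁ ^ 2 * (ν₂ * exp (-(a₀ * x + b₁ * y)) * exp (γ₂ * t)) := by
    rw [funext hdy]
    refine HasDerivAt.deriv (hda_congr
      (expd (-b₁ * (ν₂ * exp (γ₂ * t))) (-b₁) (-(a₀ * x)) y) ?_ ?_)
    · funext s
      simp only [neg_add, neg_mul, Real.exp_add, Real.exp_zero]; ring
    · simp only [neg_add, neg_mul, Real.exp_add, Real.exp_zero]; ring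
  have hder : HasDerivAt (fun s => ν₁ * exp (-a₀ * x) * exp (γ₁ * s) +
      ν₂ * exp (-(a₀ * x + b₁ * y)) * exp (γ₂ * s))
      (γ₁ * (ν₁ * exp (-a₀ * x) * exp (γ₁ * t)) +
       γ₂ * (ν₂ * exp (-(a₀ * x + b₁ * y)) * exp (γ₂ * t))) t := by
    refine hda_congr
      ((expd (ν₁ * exp (-a₀ * x)) γ₁ 0 t).add
        (expd (ν₂ * exp (-(a₀ * x + b₁ * y))) γ₂ 0 t)) ?_ ?_
    · funext s; simp only [add_zero, Pi.add_apply]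
    · simp only [add_zero]
  have hKval : K u x y = γ₁ * (ν₁ * exp (-a₀ * x) * exp (γ₁ * t)) +
      γ₂ * (ν₂ * exp (-(a₀ * x + b₁ * y)) * exp (γ₂ * t)) := by
    rw [hK, hdxx, hdx, hdyy, hdy]
    have hux : u x y = ν₁ * exp (-a₀ * x) * exp (γ₁ * t) +
        ν₂ * exp (-(a₀ * x + b₁ * y)) * exp (γ₂ * t) := rfl
    rw [hux, hγ₁, hγ₂]
    field_simp
    ring
  rw [hKval]
  exact hder
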